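/- The number S = p/q + ∑_{j=2}^∞ 1/x_j, where (x_n) is defined by the non-autonomous recurrence x_{n+1} = x_n y_{n-1}(x_n z_n + 1) with x_1 = q, is irrational. -/

import Mathlib

theorem stmt11 (p : ℤ) (q : ℕ) (z x y : ℕ → ℕ)
    (hq : 0 < q) (hcop : Int.gcd p q = 1)
    (hz : ∀ n, 1 ≤ n → 0 < z n) (hy0 : 0 < y 0)
    (hx1 : x 1 = q)
    (hxrec : ∀ n, 1 ≤ n → x (n + 1) = x n * y (n - 1) * (x n * z n + 1))
    (hy : ∀ n, 1 ≤ n → y n = x (n + 1) / x n) :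
    Irrational ((p : ℝ) / q + ∑' j : ℕ, (1 : ℝ) / x (j + 2)) := by
  -- positivity of x (n+1) and y n
  have key : ∀ n, 0 < x (n+1) ∧ 0 < y n := by
    intro n
    induction n with
    | zero => exact ⟨hx1 ▸ hq, hy0⟩
    | succ k ih =>
      have hrec : x (k+2) = x (k+1) * y k * (x (k+1) * z (k+1) + 1) := by
        have := hxrec (k+1) (by omega)
        simpa using this
      have hx2 : 0 < x (k+2) := by
        rw [hrec]; exact Nat.mul_pos (Nat.mul_pos ih.1 ih.2) (by omega)
      refine ⟨hx2, ?_⟩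
      rw [hy (k+1) (by omega)]
      refine Nat.div_pos ?_ ih.1
      calc x (k+1) = x (k+1) * 1 * 1 := by ring
        _ ≤ x (k+1) * y k * (x (k+1) * z (k+1) + 1) :=
            Nat.mul_le_mul (Nat.mul_le_mul_left _ ih.2) (by omega)
        _ = x (k+2) := hrec.symm
  have hxpos : ∀ n, 0 < x (n+1) := fun n => (key n).1
  have hypos : ∀ n, 0 < y n := fun n => (key n).2
  -- growth
  have hgrow : ∀ n, 1 ≤ n → x n * (x n + 1) ≤ x (n+1) := by
    intro n hn
    obtain ⟨k, rfl⟩ : ∃ k, n = k + 1 := ⟨n - 1, by omega⟩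
    have hrec : x (k+2) = x (k+1) * y k * (x (k+1) * z (k+1) + 1) := by
      have := hxrec (k+1) (by omega); simpa using this
    have h1 : 1 ≤ y k := hypos k
    have h2 : 1 ≤ z (k+1) := hz (k+1) (by omega)
    calc x (k+1) * (x (k+1) + 1) = x (k+1) * 1 * (x (k+1) * 1 + 1) := by ring
      _ ≤ x (k+1) * y k * (x (k+1) * z (k+1) + 1) :=
          Nat.mul_le_mul (Nat.mul_le_mul_left _ h1)
            (Nat.add_le_add_right (Nat.mul_le_mul_left _ h2) 1)
      _ = x (k+2) := hrec.symm
  have hdouble : ∀ n, 1 ≤ n → 2 * x n ≤ x (n+1) := by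
    intro n hn
    have := hgrow n hn
    have hx : 1 ≤ x n := by cases n with | zero => omega | succ k => exact hxpos k
    nlinarith
  have hpow : ∀ m j, 2^j * x (m+1) ≤ x (m+1+j) := by
    intro m j
    induction j with
    | zero => simp
    | succ j ih =>
      have h2 : 2 * x (m+1+j) ≤ x (m+1+j+1) := hdouble (m+1+j) (by omega)
      calc 2^(j+1) * x (m+1) = 2 * (2^j * x (m+1)) := by ring
        _ ≤ 2 * x (m+1+j) := by omega
        _ ≤ x (m+1+j+1) := h2
  -- divisibility
  have hdvd : ∀ n, 1 ≤ n → ∀ k, x n ∣ x (n+k) := by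
    intro n hn k
    induction k with
    | zero => simp
    | succ k ih =>
      refine ih.trans ?_
      exact ⟨y (n+k-1) * (x (n+k) * z (n+k) + 1), by show x (n+k+1) = _; rw [hxrec (n+k) (by omega)]; ring⟩
  -- real side
  set f : ℕ → ℝ := fun j => 1 / x (j+2) with hf
  have hxR : ∀ n, (0:ℝ) < x (n+1) := fun n => by exact_mod_cast hxpos n
  have hfpos : ∀ j, 0 < f j := fun j => by
    simp only [hf]
    exact div_pos one_pos (hxR (j+1))
  have hfle : ∀ m j, f (j+m) ≤ (1/2)^j * (1 / x (m+2)) := by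
    intro m j
    have h1 : (2:ℝ)^j * x (m+2) ≤ x (j+m+2) := by
      have h := hpow (m+1) j
      have he : m + 1 + 1 + j = j + m + 2 := by omega
      rw [he] at h
      exact_mod_cast h
    have hx2 : (0:ℝ) < x (m+2) := hxR (m+1)
    have hx3 : (0:ℝ) < 2^j * x (m+2) := by positivity
    have step : f (j+m) ≤ 1 / (2^j * x (m+2)) := by
      simp only [hf]
      exact one_div_le_one_div_of_le hx3 h1
    calc f (j+m) ≤ 1 / (2^j * x (m+2)) := step
      _ = (1/2)^j * (1 / x (m+2)) := by
          rw [div_pow, one_pow, div_mul_div_comm, one_mul]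
  -- summability
  have hsum : Summable f := by
    have hg : Summable (fun j : ℕ => (1/2:ℝ)^j * (1 / x 2)) :=
      summable_geometric_two.mul_right _
    refine Summable.of_nonneg_of_le (fun j => (hfpos j).le) (fun j => ?_) hg
    have h := hfle 0 j
    simpa using h
  have hsum' : ∀ m, Summable (fun j => f (j + m)) := fun m =>
    (summable_nat_add_iff m).2 hsum
  have htail_pos : ∀ m, 0 < ∑' j, f (j + m) := fun m =>
    Summable.tsum_pos (hsum' m) (fun j => (hfpos _).le) 0 (by simpa using hfpos m)
  have htail_le : ∀ m, (∑' j, f (j + m)) ≤ 2 * (1 / x (m+2)) := by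
    intro m
    have h1 : (∑' j, f (j + m)) ≤ ∑' j : ℕ, (1/2:ℝ)^j * (1 / x (m+2)) :=
      Summable.tsum_le_tsum (fun j => hfle m j) (hsum' m) (summable_geometric_two.mul_right _)
    have h2 : ∑' j : ℕ, (1/2:ℝ)^j * (1 / x (m+2)) = 2 * (1 / x (m+2)) := by
      rw [tsum_mul_right, tsum_geometric_two]
    linarith
  -- integrality of partial sums times x (m+1)
  have hint : ∀ m, ∃ A : ℤ, ((p:ℝ)/q + ∑ j ∈ Finset.range m, f j) * x (m+1) = A := by
    intro m
    refine ⟨p * ((x (m+1) / q : ℕ) : ℤ) + ∑ j ∈ Finset.range m, ((x (m+1) / x (j+2) : ℕ) : ℤ), ?_⟩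
    have hq0 : (q:ℝ) ≠ 0 := by positivity
    have hqd : q ∣ x (m+1) := by
      have h := hdvd 1 le_rfl m
      have he : 1 + m = m + 1 := by omega
      rw [he, hx1] at h
      exact h
    have hmain : ((p:ℝ)/q + ∑ j ∈ Finset.range m, f j) * x (m+1)
        = p * ((x (m+1) / q : ℕ) : ℝ) + ∑ j ∈ Finset.range m, ((x (m+1) / x (j+2) : ℕ) : ℝ) := by
      rw [add_mul, Finset.sum_mul]
      congr 1
      · rw [Nat.cast_div hqd hq0]; ring
      · refine Finset.sum_congr rfl (fun j hj => ?_)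
        have hj' := Finset.mem_range.1 hj
        have hd : x (j+2) ∣ x (m+1) := by
          have h := hdvd (j+2) (by omega) (m-1-j)
          have he : j+2+(m-1-j) = m+1 := by omega
          rwa [he] at h
        rw [Nat.cast_div hd (ne_of_gt (hxR (j+1)))]
        simp only [hf]
        ring
    rw [hmain]
    simp only [Int.cast_add, Int.cast_mul, Int.cast_natCast, Int.cast_sum]
  -- suppose rational
  rintro ⟨r, hr⟩
  set b := r.den with hb
  set a := r.num with ha
  have hb0 : (0:ℝ) < b := by exact_mod_cast r.pos
  have hra : (r:ℝ) * b = a := by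
    rw [Rat.cast_def]
    field_simp
    rw [hb, ha]; ring
  set m := 2 * b + 2 with hm
  obtain ⟨A, hA⟩ := hint m
  have hsplit : ∑ j ∈ Finset.range m, f j + ∑' j, f (j + m) = ∑' j, f j :=
    Summable.sum_add_tsum_nat_add m hsum
  set T := ∑' j, f (j + m) with hT
  have e1 : T = (r:ℝ) - ((p:ℝ)/q + ∑ j ∈ Finset.range m, f j) := by
    rw [hr, ← hsplit]; ring
  have hN : ((a * (x (m+1) : ℤ) - (b:ℤ) * A : ℤ):ℝ) = b * (x (m+1) : ℝ) * T := by
    have c1 : (b:ℝ) * (x (m+1) : ℝ) * T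
        = (r:ℝ) * b * (x (m+1):ℝ) - b * (((p:ℝ)/q + ∑ j ∈ Finset.range m, f j) * x (m+1)) := by
      rw [e1]; ring
    rw [c1, hra, hA]
    push_cast
    ring
  -- bounds
  have hx1R : (0:ℝ) < x (m+1) := hxR m
  have hx2R : (0:ℝ) < x (m+2) := hxR (m+1)
  have hTpos : 0 < T := htail_pos m
  have hgR : (x (m+1):ℝ) * ((x (m+1):ℝ) + 1) ≤ (x (m+2):ℝ) := by
    have := hgrow (m+1) (by omega)
    exact_mod_cast this
  have hb2 : 2 * b < 2 ^ m := by
    have h := Nat.lt_two_pow_self (n := m)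
    omega
  have hxm : (2:ℝ)^m ≤ (x (m+1):ℝ) := by
    have h := hpow 0 m
    have he : 0 + 1 + m = m + 1 := by omega
    rw [he] at h
    have hq1 : 1 ≤ x 1 := by omega
    have : 2^m ≤ x (m+1) := le_trans (by nlinarith [Nat.one_le_two_pow (n := m)]) h
    exact_mod_cast this
  have h2b : 2 * (b:ℝ) < 2^m := by exact_mod_cast hb2
  have hkey : 2 * (b:ℝ) * (x (m+1):ℝ) < (x (m+2):ℝ) := by nlinarith
  have hup1 : (b:ℝ) * (x (m+1):ℝ) * T ≤ (b:ℝ) * (x (m+1):ℝ) * (2 * (1 / x (m+2))) :=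
    mul_le_mul_of_nonneg_left (htail_le m) (by positivity)
  have hup2 : (b:ℝ) * (x (m+1):ℝ) * (2 * (1 / x (m+2))) < 1 := by
    rw [show (b:ℝ) * (x (m+1):ℝ) * (2 * (1 / (x (m+2):ℝ))) = (2 * b * x (m+1)) / x (m+2) from by ring,
      div_lt_one hx2R]
    exact hkey
  have h0N : (0:ℝ) < ((a * (x (m+1) : ℤ) - (b:ℤ) * A : ℤ):ℝ) := by
    rw [hN]; exact mul_pos (mul_pos hb0 hx1R) hTpos
  have h1N : ((a * (x (m+1) : ℤ) - (b:ℤ) * A : ℤ):ℝ) < 1 := by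
    rw [hN]; linarith
  have hc0 : (0:ℤ) < a * (x (m+1) : ℤ) - (b:ℤ) * A := by exact_mod_cast h0N
  have hc1 : a * (x (m+1) : ℤ) - (b:ℤ) * A < 1 := by exact_mod_cast h1N
  omega
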